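/- Let H be a digraph whose vertex set is partitioned into V_0, V_1, ..., V_{k-1} such that every arc of H goes from some V_i to V_{i+1} (indices modulo k), and suppose a linear order < on V(H) restricts to a min-ordering on the subgraph induced by each pair of circularly consecutive parts V_i ∪ V_{i+1}. Define a binary operation f on V(H) by: f(x,y) = min(x,y) when x,y belong to the same part V_i, and f(x,y) = x when x and y belong to distinct parts. Then f is a polymorphism of H that is a semi-lattice (commutative, associative, idempotent) when restricted to pairs from the same part. -/
import Mathlib


/-- Let `H` be a digraph whose vertices are partitioned into parts
`V_i = π⁻¹(i)` (via a homomorphism `π` to the directed `k`-cycle, so every arc goes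
from `V_i` to `V_{i+1}`), with a linear order that is a min-ordering on each pair of
circularly consecutive parts. Then `f(x,y) = min(x,y)` for `x,y` in the same part and
`f(x,y) = x` otherwise is a polymorphism of `H`, commutative, associative and idempotent
on pairs from the same part. -/
theorem stmt_4 {k : ℕ} (hk : 0 < k) {V : Type*} [LinearOrder V]
    (A : V → V → Prop) (π : V → ZMod k)
    (harc : ∀ x y, A x y → π y = π x + 1)
    (hmin : ∀ u u' v v', A u v → A u' v' → π u = π u' → u < u' → v' < v → A u v') :
    let f : V → V → V := fun x y => if π x = π y then min x y else x
    (∀ x1 x2 y1 y2, A x1 y1 → A x2 y2 → A (f x1 x2) (f y1 y2)) ∧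
    (∀ x y, π x = π y → f x y = f y x) ∧
    (∀ x y z, π x = π y → π y = π z → f (f x y) z = f x (f y z)) ∧
    (∀ x, f x x = x) := by
  intro f
  refine ⟨?_, ?_, ?_, ?_⟩
  · intro x1 x2 y1 y2 h1 h2
    by_cases hx : π x1 = π x2
    · have hy : π y1 = π y2 := by rw [harc _ _ h1, harc _ _ h2, hx]
      simp only [f, if_pos hx, if_pos hy]
      rcases le_or_gt x1 x2 with hxl | hxl <;> rcases le_or_gt y1 y2 with hyl | hyl
      · rwa [min_eq_left hxl, min_eq_left hyl]
      · rw [min_eq_left hxl, min_eq_right hyl.le]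
        rcases eq_or_lt_of_le hxl with rfl | hxl'
        · exact h2
        · exact hmin x1 x2 y1 y2 h1 h2 hx hxl' hyl
      · rw [min_eq_right hxl.le, min_eq_left hyl]
        rcases eq_or_lt_of_le hyl with h | hyl'
        · rwa [h]
        · exact hmin x2 x1 y2 y1 h2 h1 hx.symm hxl hyl'
      · rwa [min_eq_right hxl.le, min_eq_right hyl.le]
    · have hy : π y1 ≠ π y2 := by
        rw [harc _ _ h1, harc _ _ h2]
        exact fun h => hx (by simpa using h)
      simpa only [f, if_neg hx, if_neg hy] using h1
  · intro x y h
    simp only [f, if_pos h, if_pos h.symm, min_comm]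
  · intro x y z hxy hyz
    have h1 : π (min x y) = π x := by
      rcases min_choice x y with h | h <;> rw [h]
      exact hxy.symm
    have h2 : π (min y z) = π y := by
      rcases min_choice y z with h | h <;> rw [h]
      exact hyz.symm
    simp only [f, if_pos hxy, if_pos hyz, if_pos (h1.trans (hxy.trans hyz)),
      if_pos (hxy.trans h2.symm).symm.symm, min_assoc]
  · intro x
    simp [f]
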